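/- Let n ≥ 2, let U be a set, and let f : ℝⁿ × U → ℝⁿ be positively homogeneous of degree one in its first argument: f(s·y, u) = s·f(y, u) for all s > 0, y ∈ ℝⁿ, u ∈ U. Let y : I → ℝⁿ be differentiable on an interval I with y'(t) = f(y(t), u(t)) for a control function u : I → U, and suppose the last coordinate satisfies y_n(t) > 0 for all t ∈ I. Define the reduced state x : I → ℝ^{n−1} by x_i(t) = y_i(t)/y_n(t) for i = 1, …, n−1. Then x is differentiable and satisfies, for each i, x_i'(t) = f_i((x(t), 1), u(t)) − x_i(t)·f_n((x(t), 1), u(t)); that is, x obeys the reduced dynamics x' = f̃^{(n−1)}(x, u) − x·f̃_n(x, u), where f̃(x, u) := f((x, 1), u). -/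

import Mathlib

/-- For dynamics `y' = f(y, u)` in `ℝⁿ` (here `n + 1` coordinates, `n ≥ 1`)
with `f` positively homogeneous of degree one in the state and last state coordinate
`y_n > 0`, the reduced state `x_i = y_i / y_n` (for the first `n` coordinates) obeys the
reduced dynamics `x_i' = f̃_i(x, u) - x_i f̃_n(x, u)`, where `f̃(x, u) = f((x, 1), u)`. -/
theorem homogeneous_state_reduction {n : ℕ} (hn : 1 ≤ n) {U : Type*}
    (f : (Fin (n + 1) → ℝ) → U → (Fin (n + 1) → ℝ))
    (hhom : ∀ s : ℝ, 0 < s → ∀ (y : Fin (n + 1) → ℝ) (u : U), f (s • y) u = s • f y u)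
    (I : Set ℝ) (y : ℝ → Fin (n + 1) → ℝ) (u : ℝ → U)
    (hy : ∀ t ∈ I, HasDerivAt y (f (y t) (u t)) t)
    (hy_pos : ∀ t ∈ I, 0 < y t (Fin.last n))
    (x : ℝ → Fin n → ℝ)
    (hx : ∀ t, ∀ i : Fin n, x t i = y t i.castSucc / y t (Fin.last n)) :
    ∀ t ∈ I, ∀ i : Fin n,
      HasDerivAt (fun s => x s i)
        (f (Fin.snoc (x t) 1) (u t) i.castSucc
          - x t i * f (Fin.snoc (x t) 1) (u t) (Fin.last n)) t := by
  intro t ht i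
  have hpos := hy_pos t ht
  have hne : y t (Fin.last n) ≠ 0 := ne_of_gt hpos
  have hcomp : ∀ j : Fin (n + 1),
      HasDerivAt (fun s => y s j) (f (y t) (u t) j) t :=
    hasDerivAt_pi.1 (hy t ht)
  have hdi := hcomp i.castSucc
  have hdn := hcomp (Fin.last n)
  -- y t = y_n • (snoc (x t) 1)
  have hyeq : y t = y t (Fin.last n) • (Fin.snoc (x t) 1 : Fin (n + 1) → ℝ) := by
    funext j
    refine Fin.lastCases ?_ ?_ j
    · simp
    · intro k
      simp only [Pi.smul_apply, Fin.snoc_castSucc, smul_eq_mul, hx t k]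
      field_simp
  have hf : f (y t) (u t) = y t (Fin.last n) • f (Fin.snoc (x t) 1) (u t) := by
    conv_lhs => rw [hyeq]
    exact hhom _ hpos _ _
  have hdiv := hdi.div hdn hne
  have hfun : (fun s => x s i) = fun s => y s i.castSucc / y s (Fin.last n) := by
    funext s; exact hx s i
  rw [hfun]
  convert hdiv using 1
  case e'_4 => rfl
  case e'_5 => rfl
  case e'_8 => rfl
  rw [hf, hx t i]
  simp only [Pi.smul_apply, smul_eq_mul]
  field_simp
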